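/- arXiv:1604.02489 — 3 statements merged into one kernel-verified Lean document; each statement's English description precedes it below -/
import Mathlib

section
/- For any d, s ∈ ℕ and ε > 0 there exists r ∈ ℕ such that for any polynomial mapping φ ∈ Pol⁰_d([r], ℝ) there exists a disjoint s-subcollection B in [r] such that the t-producing function Φ̃_B of the subpolynomial φ↓_B satisfies ‖Φ̃_B(u)‖ < ε for every u ∈ B^{(≤d)}. -/
open Finset

/-- The `β`-derivative of a map `φ : F(A) → H`: `D_β φ (α) = φ(α ∪ β) - φ(α)`. -/
def fsDeriv {ι H : Type*} [DecidableEq ι] [AddCommGroup H]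
    (φ : Finset ι → H) (β : Finset ι) : Finset ι → H :=
  fun α => φ (α ∪ β) - φ α

/-- Iterated derivative `D_{β 0} ⋯ D_{β (n-1)} φ`. -/
def iterDeriv {ι H : Type*} [DecidableEq ι] [AddCommGroup H] :
    {n : ℕ} → (Finset ι → H) → (Fin n → Finset ι) → (Finset ι → H)
  | 0, φ, _ => φ
  | _ + 1, φ, β => iterDeriv (fsDeriv φ (β 0)) (fun i => β i.succ)

/-- `φ : F(A) → H` is polynomial of degree ≤ d: any d+1 pairwise disjoint
derivatives (by finite subsets of `A`) kill `φ` on `F(A)` away from them. -/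
def IsPolyDeg {ι H : Type*} [DecidableEq ι] [AddCommGroup H]
    (A : Finset ι) (d : ℕ) (φ : Finset ι → H) : Prop :=
  ∀ β : Fin (d + 1) → Finset ι, (∀ i, β i ⊆ A) →
    (∀ i j, i ≠ j → Disjoint (β i) (β j)) →
    ∀ α : Finset ι, α ⊆ A → (∀ i, Disjoint α (β i)) → iterDeriv φ β α = 0

/-- `Pol⁰_d(A,H)`: polynomial maps of degree ≤ d vanishing at `∅`. -/
def Pol0 {ι H : Type*} [DecidableEq ι] [AddCommGroup H]
    (A : Finset ι) (d : ℕ) (φ : Finset ι → H) : Prop :=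
  IsPolyDeg A d φ ∧ φ (∅ : Finset ι) = 0

/-- `‖x‖`: the distance from a real number `x` to `ℤ`. -/
noncomputable def distToInt (x : ℝ) : ℝ := |x - round x|



lemma distToInt_nonneg (x : ℝ) : 0 ≤ distToInt x := abs_nonneg _

lemma distToInt_zero : distToInt 0 = 0 := by simp [distToInt]

lemma distToInt_le (x : ℝ) (m : ℤ) : distToInt x ≤ |x - m| := by
  rw [distToInt, abs_sub_round_eq_min]
  have hf0 : 0 ≤ Int.fract x := Int.fract_nonneg x
  have hf1 : Int.fract x < 1 := Int.fract_lt_one x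
  have hfr : Int.fract x = x - ⌊x⌋ := (Int.self_sub_floor x).symm
  rcases le_or_gt (m : ℝ) (⌊x⌋ : ℝ) with h1 | h1
  · have : Int.fract x ≤ x - m := by rw [hfr]; linarith
    calc Int.fract x ⊓ (1 - Int.fract x) ≤ Int.fract x := inf_le_left
      _ ≤ |x - m| := this.trans (le_abs_self _)
  · have hm : (⌊x⌋ : ℝ) + 1 ≤ m := by
      have : ⌊x⌋ < m := by exact_mod_cast h1
      exact_mod_cast this
    have : 1 - Int.fract x ≤ -(x - m) := by rw [hfr]; linarith
    calc Int.fract x ⊓ (1 - Int.fract x) ≤ 1 - Int.fract x := inf_le_right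
      _ ≤ |x - m| := this.trans (neg_le_abs _)

lemma distToInt_add_int (x : ℝ) (m : ℤ) : distToInt (x + m) = distToInt x := by
  unfold distToInt
  rw [round_add_intCast]
  push_cast
  ring_nf

lemma distToInt_add_le (x y : ℝ) : distToInt (x + y) ≤ distToInt x + distToInt y := by
  calc distToInt (x + y) ≤ |x + y - ((round x + round y : ℤ) : ℝ)| := distToInt_le _ _
    _ = |(x - round x) + (y - round y)| := by push_cast; ring_nf
    _ ≤ |x - round x| + |y - round y| := abs_add_le _ _
    _ = distToInt x + distToInt y := rfl

lemma distToInt_le_abs (x : ℝ) : distToInt x ≤ |x| := by simpa using distToInt_le x 0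

/-! ## Alternating sums -/

/-- The alternating sum `∑_{v ⊆ u} (-1)^{|u|-|v|} φ(α ∪ ⋃_{t ∈ v} b t)`. -/
noncomputable def altSum (φ : Finset ℕ → ℝ) (b : ℕ → Finset ℕ) (u : Finset ℕ)
    (α : Finset ℕ) : ℝ :=
  ∑ v ∈ u.powerset, (-1 : ℝ) ^ (u.card - v.card) * φ (α ∪ v.biUnion b)

lemma altSum_empty (φ : Finset ℕ → ℝ) (b : ℕ → Finset ℕ) (α : Finset ℕ) :
    altSum φ b ∅ α = φ α := by simp [altSum]

lemma altSum_insert (φ : Finset ℕ → ℝ) (b : ℕ → Finset ℕ) {j : ℕ} {u : Finset ℕ}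
    (hj : j ∉ u) (α : Finset ℕ) :
    altSum φ b (insert j u) α = altSum φ b u (α ∪ b j) - altSum φ b u α := by
  unfold altSum
  rw [Finset.sum_powerset_insert hj]
  have hcard : (insert j u).card = u.card + 1 := card_insert_of_notMem hj
  have h1 : ∀ v ∈ u.powerset,
      (-1 : ℝ) ^ ((insert j u).card - v.card) * φ (α ∪ v.biUnion b)
      = -((-1 : ℝ) ^ (u.card - v.card) * φ (α ∪ v.biUnion b)) := by
    intro v hv
    have hvc : v.card ≤ u.card := card_le_card (mem_powerset.1 hv)
    have : (insert j u).card - v.card = (u.card - v.card) + 1 := by omega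
    rw [this, pow_succ]
    ring
  have h2 : ∀ v ∈ u.powerset,
      (-1 : ℝ) ^ ((insert j u).card - (insert j v).card) * φ (α ∪ (insert j v).biUnion b)
      = (-1 : ℝ) ^ (u.card - v.card) * φ ((α ∪ b j) ∪ v.biUnion b) := by
    intro v hv
    have hjv : j ∉ v := fun h => hj (mem_powerset.1 hv h)
    have hic : (insert j v).card = v.card + 1 := card_insert_of_notMem hjv
    have hvc : v.card ≤ u.card := card_le_card (mem_powerset.1 hv)
    have he : (insert j u).card - (insert j v).card = u.card - v.card := by omega
    rw [he, biUnion_insert]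
    congr 2
    exact (union_assoc _ _ _).symm
  rw [Finset.sum_congr rfl h1, Finset.sum_congr rfl h2, Finset.sum_neg_distrib]
  ring

lemma altSum_congr {φ : Finset ℕ → ℝ} {b b' : ℕ → Finset ℕ} {u : Finset ℕ}
    (h : ∀ t ∈ u, b t = b' t) (α : Finset ℕ) :
    altSum φ b u α = altSum φ b' u α := by
  unfold altSum
  refine Finset.sum_congr rfl fun v hv => ?_
  have : v.biUnion b = v.biUnion b' :=
    Finset.biUnion_congr rfl fun t ht => h t (mem_powerset.1 hv ht)
  rw [this]


lemma altSum_fsDeriv (φ : Finset ℕ → ℝ) (b : ℕ → Finset ℕ) {j : ℕ} {u : Finset ℕ}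
    (hj : j ∉ u) (α : Finset ℕ) :
    altSum (fsDeriv φ (b j)) b u α = altSum φ b (insert j u) α := by
  rw [altSum_insert φ b hj α]
  unfold altSum fsDeriv
  rw [← Finset.sum_sub_distrib]
  refine Finset.sum_congr rfl fun v hv => ?_
  have : α ∪ v.biUnion b ∪ b j = (α ∪ b j) ∪ v.biUnion b := by
    rw [union_assoc, union_comm (v.biUnion b) (b j), ← union_assoc]
  rw [this]
  ring

/-- Iterated derivative along a list of blocks. -/
def iterList : (Finset ℕ → ℝ) → List (Finset ℕ) → Finset ℕ → ℝ
  | φ, [], α => φ α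
  | φ, B :: L, α => iterList (fsDeriv φ B) L α

lemma altSum_eq_iterList (b : ℕ → Finset ℕ) :
    ∀ (l : List ℕ), l.Nodup → ∀ (φ : Finset ℕ → ℝ) (α : Finset ℕ),
      altSum φ b l.toFinset α = iterList φ (l.map b) α := by
  intro l
  induction l with
  | nil => intro _ φ α; simpa [iterList] using altSum_empty φ b α
  | cons j l ih =>
    intro hnd φ α
    have hj : j ∉ l.toFinset := by
      simpa using (List.nodup_cons.1 hnd).1
    have : (j :: l).toFinset = insert j l.toFinset := by simp
    rw [this, ← altSum_fsDeriv φ b hj α, ih (List.nodup_cons.1 hnd).2]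
    rfl

lemma iterDeriv_eq_iterList :
    ∀ {n : ℕ} (φ : Finset ℕ → ℝ) (β : Fin n → Finset ℕ) (α : Finset ℕ),
      iterDeriv φ β α = iterList φ (List.ofFn β) α := by
  intro n
  induction n with
  | zero => intro φ β α; simp [iterDeriv, iterList, List.ofFn_zero]
  | succ n ih =>
    intro φ β α
    rw [List.ofFn_succ]
    show iterDeriv (fsDeriv φ (β 0)) (fun i => β i.succ) α = _
    rw [ih]
    rfl

/-- A reformulation of being polynomial of degree ≤ d, via alternating sums over
arbitrary finite index sets of cardinality `d+1`. -/
def PB (A : Finset ℕ) (d : ℕ) (φ : Finset ℕ → ℝ) : Prop :=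
  ∀ (b : ℕ → Finset ℕ) (u : Finset ℕ), u.card = d + 1 → (∀ t ∈ u, b t ⊆ A) →
    (∀ t ∈ u, ∀ t' ∈ u, t ≠ t' → Disjoint (b t) (b t')) →
    ∀ α : Finset ℕ, α ⊆ A → (∀ t ∈ u, Disjoint α (b t)) → altSum φ b u α = 0

lemma pb_of_isPolyDeg {A : Finset ℕ} {d : ℕ} {φ : Finset ℕ → ℝ}
    (h : IsPolyDeg A d φ) : PB A d φ := by
  intro b u hcard hsub hdisj α hα hαd
  classical
  set l : List ℕ := u.sort (· ≤ ·) with hl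
  have hlen : l.length = d + 1 := by rw [hl, Finset.length_sort]; exact hcard
  have hnd : l.Nodup := Finset.sort_nodup u _
  have htf : l.toFinset = u := Finset.sort_toFinset u _
  have hmem : ∀ i : Fin l.length, l.get i ∈ u := by
    intro i; rw [← htf]; exact List.mem_toFinset.2 (l.get_mem i)
  have hinj : Function.Injective l.get := List.nodup_iff_injective_get.1 hnd
  set β : Fin (d + 1) → Finset ℕ := fun i => b (l.get (Fin.cast hlen.symm i)) with hβ
  have h0 : iterDeriv φ β α = 0 := by
    refine h β (fun i => hsub _ (hmem _)) ?_ α hα (fun i => hαd _ (hmem _))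
    intro i j hij
    refine hdisj _ (hmem _) _ (hmem _) ?_
    intro hEq
    exact hij (by
      have := hinj hEq
      exact Fin.ext (by simpa [Fin.ext_iff] using this))
  have hofn : List.ofFn β = l.map b := by
    refine List.ext_get (by simp [hlen]) ?_
    intro n h1 h2
    simp only [List.get_ofFn, hβ, List.get_eq_getElem, List.getElem_map, List.getElem_ofFn]
    congr 1
  rw [← htf, altSum_eq_iterList b l hnd φ α, ← hofn, ← iterDeriv_eq_iterList, h0]

lemma PB.mono {A A' : Finset ℕ} {d : ℕ} {φ : Finset ℕ → ℝ}
    (h : PB A d φ) (hAA : A' ⊆ A) : PB A' d φ := by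
  intro b u hcard hsub hdisj α hα hαd
  exact h b u hcard (fun t ht => (hsub t ht).trans hAA) hdisj α (hα.trans hAA) hαd

lemma PB.zero {A : Finset ℕ} {d : ℕ} {φ : Finset ℕ → ℝ}
    (h : ∀ x, φ x = 0) : PB A d φ := by
  intro b u hcard hsub hdisj α hα hαd
  simp [altSum, h]


lemma neg_one_pow_sub_real {a bb : ℕ} (h : bb ≤ a) :
    (-1 : ℝ) ^ (a - bb) = (-1 : ℝ) ^ a * (-1 : ℝ) ^ bb := by
  have h2 : a + bb = (a - bb) + 2 * bb := by omega
  have : (-1 : ℝ) ^ (a + bb) = (-1 : ℝ) ^ (a - bb) * ((-1 : ℝ) ^ (2 * bb)) := by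
    rw [← pow_add, h2]
  have h3 : (-1 : ℝ) ^ (2 * bb) = 1 := by
    rw [pow_mul]; norm_num
  rw [pow_add] at this
  rw [h3, mul_one] at this
  nlinarith [this, sq_nonneg ((-1:ℝ)^bb), pow_mul_pow_eq_one bb (by norm_num : (-1:ℝ) * -1 = 1)]

lemma sign_sum_zero {u : Finset ℕ} (hu : u.Nonempty) :
    ∑ v ∈ u.powerset, (-1 : ℝ) ^ (u.card - v.card) = 0 := by
  have h1 : ∀ v ∈ u.powerset, (-1 : ℝ) ^ (u.card - v.card)
      = (-1 : ℝ) ^ u.card * (-1 : ℝ) ^ v.card := by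
    intro v hv
    exact neg_one_pow_sub_real (card_le_card (mem_powerset.1 hv))
  rw [Finset.sum_congr rfl h1, ← Finset.mul_sum]
  have hz : (∑ v ∈ u.powerset, (-1:ℝ)^v.card) = 0 := by
    have h2 := Finset.sum_powerset_neg_one_pow_card_of_nonempty hu
    have h3 : (∑ v ∈ u.powerset, (-1:ℝ)^v.card)
        = ((∑ v ∈ u.powerset, (-1:ℤ)^v.card : ℤ) : ℝ) := by push_cast; rfl
    rw [h3, h2]; norm_num
  rw [hz, mul_zero]

lemma altSum_vanish {A : Finset ℕ} {d : ℕ} {φ : Finset ℕ → ℝ} (h : PB A d φ) :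
    ∀ (n : ℕ) (b : ℕ → Finset ℕ) (u : Finset ℕ), u.card = n → d + 1 ≤ n →
    (∀ t ∈ u, b t ⊆ A) →
    (∀ t ∈ u, ∀ t' ∈ u, t ≠ t' → Disjoint (b t) (b t')) →
    ∀ α : Finset ℕ, α ⊆ A → (∀ t ∈ u, Disjoint α (b t)) → altSum φ b u α = 0 := by
  intro n
  induction n using Nat.strong_induction_on with
  | _ n ih =>
    intro b u hcard hn hsub hdisj α hα hαd
    rcases eq_or_lt_of_le hn with heq | hlt
    · exact h b u (hcard.trans heq.symm) hsub hdisj α hα hαd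
    · have hne : u.Nonempty := card_pos.1 (by omega)
      obtain ⟨j, hj⟩ := hne
      have hju : u = insert j (u.erase j) := (insert_erase hj).symm
      have hjne : j ∉ u.erase j := notMem_erase j u
      have hec : (u.erase j).card = n - 1 := by rw [card_erase_of_mem hj, hcard]
      have hsub' : ∀ t ∈ u.erase j, b t ⊆ A := fun t ht => hsub t (mem_of_mem_erase ht)
      have hdisj' : ∀ t ∈ u.erase j, ∀ t' ∈ u.erase j, t ≠ t' → Disjoint (b t) (b t') :=
        fun t ht t' ht' => hdisj t (mem_of_mem_erase ht) t' (mem_of_mem_erase ht')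
      rw [hju, altSum_insert φ b hjne α]
      have z1 : altSum φ b (u.erase j) (α ∪ b j) = 0 := by
        refine ih (n-1) (by omega) b _ hec (by omega) hsub' hdisj' _ ?_ ?_
        · exact union_subset hα (hsub j hj)
        · intro t ht
          refine disjoint_union_left.2 ⟨hαd t (mem_of_mem_erase ht), ?_⟩
          exact hdisj j hj t (mem_of_mem_erase ht) (fun he => hjne (he ▸ ht))
      have z2 : altSum φ b (u.erase j) α = 0 :=
        ih (n-1) (by omega) b _ hec (by omega) hsub' hdisj' α hα
          (fun t ht => hαd t (mem_of_mem_erase ht))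
      rw [z1, z2, sub_zero]

lemma PB.drop {A B : Finset ℕ} {d : ℕ} {φ : Finset ℕ → ℝ}
    (h : PB A (d + 1) φ) (hB : B ⊆ A) :
    PB (A \ B) d (fun α => φ (B ∪ α) - φ B - φ α) := by
  intro b u hcard hsub hdisj α hα hαd
  obtain ⟨j, hj⟩ := Infinite.exists_notMem_finset u
  classical
  set b' : ℕ → Finset ℕ := Function.update b j B with hb'
  have hb'u : ∀ t ∈ u, b' t = b t := fun t ht =>
    Function.update_of_ne (show t ≠ j from fun he => hj (by rw [← he]; exact ht)) _ _
  have hb'j : b' j = B := Function.update_self _ _ _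
  have hBd : ∀ t ∈ u, Disjoint B (b t) := fun t ht =>
    (Finset.sdiff_disjoint.mono_left (hsub t ht)).symm
  have h1 : altSum φ b' (insert j u) α = 0 := by
    refine h b' (insert j u) ?_ ?_ ?_ α (hα.trans sdiff_subset) ?_
    · rw [card_insert_of_notMem hj, hcard]
    · intro t ht
      rcases mem_insert.1 ht with h1' | ht'
      · rw [h1', hb'j]; exact hB
      · rw [hb'u t ht']; exact (hsub t ht').trans sdiff_subset
    · intro t ht t' ht' htt'
      rcases mem_insert.1 ht with h1' | h1' <;> rcases mem_insert.1 ht' with h2' | h2'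
      · exact absurd (h1'.trans h2'.symm) htt'
      · rw [h1', hb'j, hb'u t' h2']; exact hBd t' h2'
      · rw [h2', hb'j, hb'u t h1']; exact (hBd t h1').symm
      · rw [hb'u t h1', hb'u t' h2']; exact hdisj t h1' t' h2' htt'
    · intro t ht
      rcases mem_insert.1 ht with h1' | ht'
      · rw [h1', hb'j]
        exact Finset.disjoint_of_subset_left hα Finset.sdiff_disjoint
      · rw [hb'u t ht']; exact hαd t ht'
  rw [altSum_insert φ b' hj α] at h1
  rw [altSum_congr hb'u, altSum_congr hb'u] at h1
  have hkey : altSum φ b u (α ∪ B) = altSum φ b u α := by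
    have : α ∪ b' j = α ∪ B := by rw [hb'j]
    rw [this] at h1; linarith
  have hne : u.Nonempty := card_pos.1 (by omega)
  unfold altSum
  have expand : ∀ v ∈ u.powerset,
      (-1 : ℝ) ^ (u.card - v.card) * (φ (B ∪ (α ∪ v.biUnion b)) - φ B - φ (α ∪ v.biUnion b))
      = (-1 : ℝ) ^ (u.card - v.card) * φ ((α ∪ B) ∪ v.biUnion b)
        - (-1 : ℝ) ^ (u.card - v.card) * φ B
        - (-1 : ℝ) ^ (u.card - v.card) * φ (α ∪ v.biUnion b) := by
    intro v hv
    have : B ∪ (α ∪ v.biUnion b) = (α ∪ B) ∪ v.biUnion b := by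
      rw [← union_assoc, union_comm B α]
    rw [this]; ring
  rw [Finset.sum_congr rfl expand]
  rw [Finset.sum_sub_distrib, Finset.sum_sub_distrib, ← Finset.sum_mul]
  rw [sign_sum_zero hne, zero_mul]
  have e1 : ∑ v ∈ u.powerset, (-1:ℝ)^(u.card - v.card) * φ ((α ∪ B) ∪ v.biUnion b)
      = altSum φ b u (α ∪ B) := rfl
  have e2 : ∑ v ∈ u.powerset, (-1:ℝ)^(u.card - v.card) * φ (α ∪ v.biUnion b)
      = altSum φ b u α := rfl
  rw [e1, e2, hkey]
  ring

lemma PB.shift {A B : Finset ℕ} {d : ℕ} {φ : Finset ℕ → ℝ}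
    (h : PB A d φ) (hB : B ⊆ A) :
    PB (A \ B) d (fun α => φ (B ∪ α)) := by
  intro b u hcard hsub hdisj α hα hαd
  have expand : ∀ v ∈ u.powerset,
      (-1 : ℝ) ^ (u.card - v.card) * φ (B ∪ (α ∪ v.biUnion b))
      = (-1 : ℝ) ^ (u.card - v.card) * φ ((B ∪ α) ∪ v.biUnion b) := by
    intro v hv; rw [union_assoc]
  have : altSum (fun α => φ (B ∪ α)) b u α = altSum φ b u (B ∪ α) := by
    unfold altSum; exact Finset.sum_congr rfl expand
  rw [this]
  refine h b u hcard (fun t ht => (hsub t ht).trans sdiff_subset) hdisj _ ?_ ?_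
  · exact union_subset hB (hα.trans sdiff_subset)
  · intro t ht
    refine disjoint_union_left.2 ⟨?_, hαd t ht⟩
    exact (Finset.sdiff_disjoint.mono_left (hsub t ht)).symm

lemma sum_altSum (φ : Finset ℕ → ℝ) (b : ℕ → Finset ℕ) :
    ∀ (γ : Finset ℕ) (α : Finset ℕ),
      ∑ u ∈ γ.powerset, altSum φ b u α = φ (α ∪ γ.biUnion b) := by
  intro γ
  classical
  induction γ using Finset.induction_on with
  | empty => intro α; simp [altSum_empty]
  | @insert j γ hj ih =>
    intro α
    rw [Finset.sum_powerset_insert hj]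
    have h2 : ∀ u ∈ γ.powerset, altSum φ b (insert j u) α
        = altSum φ b u (α ∪ b j) - altSum φ b u α := fun u hu =>
      altSum_insert φ b (fun h => hj (mem_powerset.1 hu h)) α
    rw [Finset.sum_congr rfl h2, Finset.sum_sub_distrib, ih α]
    rw [ih (α ∪ b j), biUnion_insert, ← union_assoc]
    ring

lemma PB.theta {A A'' : Finset ℕ} {d : ℕ} {φ : Finset ℕ → ℝ} {b : ℕ → Finset ℕ}
    {w : Finset ℕ} (h : PB A d φ) (hb : ∀ t ∈ w, b t ⊆ A) (hA'' : A'' ⊆ A)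
    (hdisjA : Disjoint A'' (w.biUnion b)) :
    PB A'' d (fun α => altSum φ b w α - altSum φ b w ∅) := by
  intro b'' u hcard hsub hdisj α hα hαd
  have hne : u.Nonempty := card_pos.1 (by omega)
  have inner0 : ∀ v' ∈ w.powerset, altSum φ b'' u (α ∪ v'.biUnion b) = 0 := by
    intro v' hv'
    refine h b'' u hcard (fun t ht => (hsub t ht).trans hA'') hdisj _ ?_ ?_
    · refine union_subset (hα.trans hA'') ?_
      intro x hx
      rcases Finset.mem_biUnion.1 hx with ⟨t, ht, hxt⟩
      exact hb t (mem_powerset.1 hv' ht) hxt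
    · intro t ht
      refine disjoint_union_left.2 ⟨hαd t ht, ?_⟩
      have h1 : v'.biUnion b ⊆ w.biUnion b :=
        biUnion_subset_biUnion_of_subset_left _ (mem_powerset.1 hv')
      exact (hdisjA.mono (hsub t ht) h1).symm
  have step0 : altSum (fun α => altSum φ b w α - altSum φ b w ∅) b'' u α
      = ∑ v ∈ u.powerset, (-1:ℝ)^(u.card - v.card)
          * (altSum φ b w (α ∪ v.biUnion b'') - altSum φ b w ∅) := rfl
  rw [step0]
  have split : ∀ v ∈ u.powerset, (-1:ℝ)^(u.card - v.card)
        * (altSum φ b w (α ∪ v.biUnion b'') - altSum φ b w ∅)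
      = (-1:ℝ)^(u.card - v.card) * altSum φ b w (α ∪ v.biUnion b'')
        - (-1:ℝ)^(u.card - v.card) * altSum φ b w ∅ := fun v hv => by ring
  rw [Finset.sum_congr rfl split, Finset.sum_sub_distrib, ← Finset.sum_mul,
    sign_sum_zero hne, zero_mul, sub_zero]
  have keyre : ∀ v ∈ u.powerset, (-1:ℝ)^(u.card - v.card) * altSum φ b w (α ∪ v.biUnion b'')
      = ∑ v' ∈ w.powerset, (-1:ℝ)^(w.card - v'.card)
          * ((-1:ℝ)^(u.card - v.card) * φ ((α ∪ v'.biUnion b) ∪ v.biUnion b'')) := by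
    intro v hv
    unfold altSum
    rw [Finset.mul_sum]
    refine Finset.sum_congr rfl fun v' hv' => ?_
    have huni : α ∪ v.biUnion b'' ∪ v'.biUnion b = (α ∪ v'.biUnion b) ∪ v.biUnion b'' := by
      rw [union_assoc, union_comm (v.biUnion b'') _, ← union_assoc]
    rw [huni]; ring
  rw [Finset.sum_congr rfl keyre, Finset.sum_comm]
  refine Finset.sum_eq_zero fun v' hv' => ?_
  have final : ∑ v ∈ u.powerset, (-1:ℝ)^(w.card - v'.card)
        * ((-1:ℝ)^(u.card - v.card) * φ ((α ∪ v'.biUnion b) ∪ v.biUnion b''))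
      = (-1:ℝ)^(w.card - v'.card) * altSum φ b'' u (α ∪ v'.biUnion b) := by
    unfold altSum; rw [Finset.mul_sum]
  rw [final, inner0 v' hv', mul_zero]

lemma Lmain : ∀ (d m : ℕ) (ε : ℝ), 0 < ε →
    ∃ N : ℕ, 0 < N ∧ ∀ A : Finset ℕ, N ≤ A.card →
      ∀ (I : Type) (instI : Fintype I), @Fintype.card I instI ≤ m →
        ∀ φ : I → Finset ℕ → ℝ, (∀ i, PB A d (φ i)) → (∀ i, φ i ∅ = 0) →
          ∃ α : Finset ℕ, α.Nonempty ∧ α ⊆ A ∧ ∀ i, distToInt (φ i α) < ε := by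
  intro d
  induction d with
  | zero =>
    intro m ε hε
    refine ⟨1, one_pos, ?_⟩
    intro A hA I instI hcardI φ hPB hφ0
    have hzero : ∀ (i : I) (γ : Finset ℕ), γ ⊆ A → φ i γ = 0 := by
      intro i γ hγ
      have h0 := hPB i (fun _ => γ) {0} (by simp) (by simpa using hγ)
        (by intro t ht t' ht' htt'; simp at ht ht'; omega)
        ∅ (empty_subset A) (by intro t ht; exact disjoint_empty_left _)
      have : altSum (φ i) (fun _ => γ) {0} ∅ = φ i γ - φ i ∅ := by
        have h1 : ({0} : Finset ℕ) = insert 0 ∅ := rfl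
        rw [h1, altSum_insert (φ i) _ (notMem_empty 0) ∅, altSum_empty, altSum_empty,
          empty_union]
      rw [this, hφ0 i, sub_zero] at h0
      exact h0
    obtain ⟨a, ha⟩ := card_pos.1 (by omega : 0 < A.card)
    refine ⟨{a}, singleton_nonempty a, singleton_subset_iff.2 ha, ?_⟩
    intro i
    rw [hzero i {a} (singleton_subset_iff.2 ha), distToInt_zero]
    exact hε
  | succ d IH =>
    intro m ε hε
    set Q : ℕ := ⌈(2:ℝ)/ε⌉₊ + 1 with hQdef
    have hQpos : 0 < Q := Nat.succ_pos _
    have hQRpos : (0:ℝ) < Q := by exact_mod_cast hQpos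
    have hQ : (1:ℝ)/Q < ε/2 := by
      have h1 : (2:ℝ)/ε ≤ ⌈(2:ℝ)/ε⌉₊ := Nat.le_ceil _
      have h2 : ((2:ℝ)/ε) < Q := by
        rw [hQdef]; push_cast; linarith
      rw [div_lt_iff₀ hε] at h2
      rw [div_lt_div_iff₀ hQRpos two_pos]
      nlinarith
    set K : ℕ := Q ^ m + 1 with hKdef
    have hKpos : 0 < K := Nat.succ_pos _
    have hKRpos : (0:ℝ) < K := by exact_mod_cast hKpos
    set δ : ℝ := ε / (2 * K) with hδdef
    have hδpos : 0 < δ := by positivity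
    have hKδ : (K:ℝ) * δ = ε / 2 := by
      rw [hδdef]; field_simp
    obtain ⟨N₀, hN₀pos, hN₀⟩ := IH (K * m) δ hδpos
    refine ⟨K * N₀, by positivity, ?_⟩
    intro A hA I instI hcardI φ hPB hφ0
    letI : Fintype I := instI
    letI : DecidableEq I := Classical.decEq I
    -- sequential construction of blocks
    have key : ∀ j : ℕ, j ≤ K → ∃ β : ℕ → Finset ℕ,
        (∀ t, t < j → (β t).Nonempty ∧ β t ⊆ A ∧ (β t).card ≤ N₀) ∧
        (∀ t, t < j → ∀ t', t' < j → t ≠ t' → Disjoint (β t) (β t')) ∧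
        (∀ t, t < j → ∀ k : ℕ, ∀ i : I,
          distToInt (φ i ((Finset.Ico k t).biUnion β ∪ β t)
            - φ i ((Finset.Ico k t).biUnion β) - φ i (β t)) < δ) := by
      intro j
      induction j with
      | zero =>
        intro _
        exact ⟨fun _ => ∅, fun t ht => absurd ht (Nat.not_lt_zero t),
          fun t ht => absurd ht (Nat.not_lt_zero t),
          fun t ht => absurd ht (Nat.not_lt_zero t)⟩
      | succ j ihj =>
        intro hjK
        obtain ⟨β, h1, h2, h3⟩ := ihj (by omega)
        set U : Finset ℕ := (Finset.range j).biUnion β with hU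
        have hUA : U ⊆ A := biUnion_subset.2 fun t ht => (h1 t (mem_range.1 ht)).2.1
        have hUcard : U.card ≤ j * N₀ := by
          calc U.card ≤ ∑ t ∈ Finset.range j, (β t).card := card_biUnion_le
            _ ≤ ∑ _t ∈ Finset.range j, N₀ :=
                Finset.sum_le_sum fun t ht => (h1 t (mem_range.1 ht)).2.2
            _ = j * N₀ := by rw [Finset.sum_const, card_range, smul_eq_mul]
        have hrem : N₀ ≤ (A \ U).card := by
          have h4 := Finset.le_card_sdiff U A
          have h5 : j * N₀ + N₀ ≤ K * N₀ := by
            calc j * N₀ + N₀ = (j+1) * N₀ := (Nat.succ_mul j N₀).symm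
              _ ≤ K * N₀ := Nat.mul_le_mul_right _ hjK
          omega
        obtain ⟨A', hA'sub, hA'card⟩ := Finset.exists_subset_card_eq hrem
        set η : Fin K × I → Finset ℕ → ℝ := fun p γ =>
          φ p.2 ((Finset.Ico (p.1 : ℕ) j).biUnion β ∪ γ)
            - φ p.2 ((Finset.Ico (p.1 : ℕ) j).biUnion β) - φ p.2 γ with hη
        have hηPB : ∀ p, PB A' d (η p) := by
          intro p
          have hVU : (Finset.Ico (p.1 : ℕ) j).biUnion β ⊆ U := by
            apply biUnion_subset.2
            intro t ht
            exact subset_biUnion_of_mem β (mem_range.2 (Finset.mem_Ico.1 ht).2)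
          have hVA : (Finset.Ico (p.1 : ℕ) j).biUnion β ⊆ A := hVU.trans hUA
          exact ((hPB p.2).drop hVA).mono
            (hA'sub.trans (sdiff_subset_sdiff (Finset.Subset.refl A) hVU))
        have hη0 : ∀ p, η p ∅ = 0 := by
          intro p; simp [hη, hφ0]
        have hcard' : Fintype.card (Fin K × I) ≤ K * m := by
          rw [Fintype.card_prod, Fintype.card_fin]
          exact Nat.mul_le_mul_left _ hcardI
        obtain ⟨γnew, hγne, hγsub, hγdist⟩ :=
          hN₀ A' (le_of_eq hA'card.symm) (Fin K × I) _ hcard' η hηPB hη0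
        set β' : ℕ → Finset ℕ := Function.update β j γnew with hβ'
        have hβ'old : ∀ t, t ≠ j → β' t = β t := fun t ht => Function.update_of_ne ht _ _
        have hβ'j : β' j = γnew := Function.update_self _ _ _
        have hγA : γnew ⊆ A := hγsub.trans (hA'sub.trans sdiff_subset)
        have hγU : Disjoint γnew U := Finset.sdiff_disjoint.mono_left (hγsub.trans hA'sub)
        refine ⟨β', ?_, ?_, ?_⟩
        · intro t ht
          rcases Nat.lt_or_ge t j with htj | htj
          · rw [hβ'old t (by omega)]; exact h1 t htj
          · have : t = j := by omega
            subst this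
            exact ⟨hβ'j ▸ hγne, hβ'j ▸ hγA,
              hβ'j ▸ ((card_le_card hγsub).trans (le_of_eq hA'card))⟩
        · intro t ht t' ht' htt'
          rcases Nat.lt_or_ge t j with htj | htj <;> rcases Nat.lt_or_ge t' j with ht'j | ht'j
          · rw [hβ'old t (by omega), hβ'old t' (by omega)]; exact h2 t htj t' ht'j htt'
          · have : t' = j := by omega
            subst this
            rw [hβ'old t (by omega), hβ'j]
            exact (hγU.mono_right (subset_biUnion_of_mem β (mem_range.2 htj))).symm
          · have : t = j := by omega
            subst this
            rw [hβ'old t' (by omega), hβ'j]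
            exact hγU.mono_right (subset_biUnion_of_mem β (mem_range.2 ht'j))
          · omega
        · intro t ht k i
          rcases Nat.lt_or_ge t j with htj | htj
          · have hIcoeq : (Finset.Ico k t).biUnion β' = (Finset.Ico k t).biUnion β :=
              biUnion_congr rfl fun x hx => hβ'old x (by
                have := (Finset.mem_Ico.1 hx).2; omega)
            rw [hIcoeq, hβ'old t (by omega)]
            exact h3 t htj k i
          · have htj' : t = j := by omega
            subst htj'
            have hIcoeq : (Finset.Ico k t).biUnion β' = (Finset.Ico k t).biUnion β :=
              biUnion_congr rfl fun x hx => hβ'old x (by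
                have := (Finset.mem_Ico.1 hx).2; omega)
            rw [hIcoeq, hβ'j]
            rcases Nat.lt_or_ge k t with hkj | hkj
            · have hkK : k < K := by omega
              have := hγdist (⟨k, hkK⟩, i)
              simpa [hη] using this
            · have hempty : Finset.Ico k t = ∅ := Finset.Ico_eq_empty (by omega)
              rw [hempty]
              simpa [hφ0 i, distToInt_zero] using hδpos
    obtain ⟨β, hβ1, hβ2, hβ3⟩ := key K le_rfl
    -- partial sums and pigeonhole
    set S : I → ℕ → ℝ := fun i k => ∑ t ∈ Finset.range k, φ i (β t) with hS
    have hbox : ∀ (i : I) (k : ℕ), ⌊Int.fract (S i k) * Q⌋₊ < Q := by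
      intro i k
      have h0 : (0:ℝ) ≤ Int.fract (S i k) * Q :=
        mul_nonneg (Int.fract_nonneg _) (le_of_lt hQRpos)
      rw [Nat.floor_lt h0]
      calc Int.fract (S i k) * Q < 1 * Q :=
            mul_lt_mul_of_pos_right (Int.fract_lt_one _) hQRpos
        _ = Q := one_mul _
    set c : Fin (K+1) → (I → Fin Q) := fun k i => ⟨⌊Int.fract (S i k.1) * Q⌋₊, hbox i k.1⟩
      with hc
    have hcards : Fintype.card (I → Fin Q) < Fintype.card (Fin (K+1)) := by
      rw [Fintype.card_fun, Fintype.card_fin, Fintype.card_fin]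
      have : Q ^ Fintype.card I ≤ Q ^ m := Nat.pow_le_pow_right (by omega) hcardI
      omega
    obtain ⟨k₀, l₀, hkl, hceq⟩ := Fintype.exists_ne_map_eq_of_card_lt c hcards
    have main : ∀ ka la : Fin (K+1), (ka:ℕ) < (la:ℕ) → c ka = c la →
        ∃ α : Finset ℕ, α.Nonempty ∧ α ⊆ A ∧ ∀ i, distToInt (φ i α) < ε := by
      intro ka la hlt hceq'
      set k : ℕ := ka.1 with hk
      set l : ℕ := la.1 with hl
      have hlK : l ≤ K := by omega
      have hfr : ∀ i, |Int.fract (S i l) - Int.fract (S i k)| < 1/Q := by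
        intro i
        have hii : (c ka i : ℕ) = (c la i : ℕ) := by rw [hceq']
        rw [hc] at hii
        simp only at hii
        set x := Int.fract (S i k) with hx
        set y := Int.fract (S i l) with hy
        have hx0 : (0:ℝ) ≤ x * Q := mul_nonneg (Int.fract_nonneg _) (le_of_lt hQRpos)
        have hy0 : (0:ℝ) ≤ y * Q := mul_nonneg (Int.fract_nonneg _) (le_of_lt hQRpos)
        have hxl : (⌊x * Q⌋₊ : ℝ) ≤ x * Q := Nat.floor_le hx0
        have hxu : x * Q < ⌊x * Q⌋₊ + 1 := Nat.lt_floor_add_one _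
        have hyl : (⌊y * Q⌋₊ : ℝ) ≤ y * Q := Nat.floor_le hy0
        have hyu : y * Q < ⌊y * Q⌋₊ + 1 := Nat.lt_floor_add_one _
        have heqf : (⌊x * Q⌋₊ : ℝ) = (⌊y * Q⌋₊ : ℝ) := by exact_mod_cast hii
        rw [abs_sub_lt_iff]
        constructor
        · rw [lt_div_iff₀ hQRpos, sub_mul]; linarith
        · rw [lt_div_iff₀ hQRpos, sub_mul]; linarith
      have hdS : ∀ i, distToInt (S i l - S i k) < 1/Q := by
        intro i
        have e1 := Int.self_sub_floor (S i l)
        have e2 := Int.self_sub_floor (S i k)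
        have hdecomp : S i l - S i k
            = (Int.fract (S i l) - Int.fract (S i k)) + ((⌊S i l⌋ - ⌊S i k⌋ : ℤ) : ℝ) := by
          push_cast
          linarith
        rw [hdecomp, distToInt_add_int]
        exact lt_of_le_of_lt (distToInt_le_abs _) (hfr i)
      have hsumIco : ∀ i, S i l - S i k = ∑ t ∈ Finset.Ico k l, φ i (β t) := fun i =>
        (Finset.sum_Ico_eq_sub _ (le_of_lt hlt)).symm
      have acc : ∀ (i : I) (l' : ℕ), k ≤ l' → l' ≤ K →
          distToInt (φ i ((Finset.Ico k l').biUnion β) - ∑ t ∈ Finset.Ico k l', φ i (β t))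
            ≤ ((l' - k : ℕ) : ℝ) * δ := by
        intro i l'
        induction l' with
        | zero =>
          intro hk0 _
          have hk00 : k = 0 := by omega
          rw [hk00]
          simp [hφ0 i, distToInt_zero]
        | succ l' ihl =>
          intro hkl' hl'K
          rcases eq_or_lt_of_le hkl' with heq | hlt'
          · rw [← heq]
            simp [hφ0 i, distToInt_zero]
          · have hkle : k ≤ l' := by omega
            have hIco : Finset.Ico k (l'+1) = insert l' (Finset.Ico k l') :=
              Nat.Ico_succ_right_eq_insert_Ico hkle
            have hnotmem : l' ∉ Finset.Ico k l' := by simp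
            rw [hIco, Finset.sum_insert hnotmem, biUnion_insert]
            have hrw : φ i (β l' ∪ (Finset.Ico k l').biUnion β)
                - (φ i (β l') + ∑ t ∈ Finset.Ico k l', φ i (β t))
                = (φ i ((Finset.Ico k l').biUnion β ∪ β l')
                    - φ i ((Finset.Ico k l').biUnion β) - φ i (β l'))
                  + (φ i ((Finset.Ico k l').biUnion β) - ∑ t ∈ Finset.Ico k l', φ i (β t)) := by
              rw [union_comm]; ring
            rw [hrw]
            have hstep := distToInt_add_le
              (φ i ((Finset.Ico k l').biUnion β ∪ β l')
                - φ i ((Finset.Ico k l').biUnion β) - φ i (β l'))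
              (φ i ((Finset.Ico k l').biUnion β) - ∑ t ∈ Finset.Ico k l', φ i (β t))
            have hb3 := hβ3 l' (by omega) k i
            have hihl := ihl hkle (by omega)
            have hcast : ((l'+1 - k : ℕ):ℝ) = ((l' - k : ℕ):ℝ) + 1 := by
              have hn : l'+1-k = (l'-k)+1 := by omega
              rw [hn]; push_cast; ring
            calc distToInt _ ≤ _ + _ := hstep
              _ ≤ δ + ((l' - k : ℕ):ℝ) * δ := add_le_add (le_of_lt hb3) hihl
              _ = ((l'+1 - k : ℕ):ℝ) * δ := by rw [hcast]; ring
      refine ⟨(Finset.Ico k l).biUnion β, ?_, ?_, ?_⟩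
      · have hkK : k < K := by omega
        have hkmem : k ∈ Finset.Ico k l := Finset.mem_Ico.2 ⟨le_refl k, hlt⟩
        obtain ⟨x, hxmem⟩ := (hβ1 k hkK).1
        exact ⟨x, Finset.mem_biUnion.2 ⟨k, hkmem, hxmem⟩⟩
      · exact biUnion_subset.2 fun t ht =>
          (hβ1 t (by have := (Finset.mem_Ico.1 ht).2; omega)).2.1
      · intro i
        have hdecomp2 : φ i ((Finset.Ico k l).biUnion β)
            = (φ i ((Finset.Ico k l).biUnion β) - ∑ t ∈ Finset.Ico k l, φ i (β t))
              + (S i l - S i k) := by rw [hsumIco i]; ring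
        rw [hdecomp2]
        have hstep := distToInt_add_le
          (φ i ((Finset.Ico k l).biUnion β) - ∑ t ∈ Finset.Ico k l, φ i (β t))
          (S i l - S i k)
        have hacc := acc i l (le_of_lt hlt) hlK
        have hlkK : ((l - k : ℕ):ℝ) ≤ (K:ℝ) := by
          have : l - k ≤ K := by omega
          exact_mod_cast this
        have h6 : ((l - k : ℕ):ℝ) * δ ≤ (K:ℝ) * δ :=
          mul_le_mul_of_nonneg_right hlkK (le_of_lt hδpos)
        have h7 := hdS i
        calc distToInt _ ≤ _ + _ := hstep
          _ ≤ (K:ℝ) * δ + 1/Q := add_le_add (hacc.trans h6) (le_of_lt h7)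
          _ < ε/2 + ε/2 := by rw [hKδ]; linarith
          _ = ε := by ring
    rcases Ne.lt_or_gt hkl with hlt | hlt
    · exact main k₀ l₀ hlt hceq
    · exact main l₀ k₀ hlt hceq.symm

lemma sum_powerset_image_val {s : ℕ} (γ : Finset (Fin s)) (F : Finset ℕ → ℝ) :
    ∑ w ∈ (γ.image Fin.val).powerset, F w = ∑ u ∈ γ.powerset, F (u.image Fin.val) := by
  classical
  induction γ using Finset.induction_on generalizing F with
  | empty => simp
  | @insert j γ hj ih =>
    have hjv : (j : ℕ) ∉ γ.image Fin.val := by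
      intro hmem
      rcases Finset.mem_image.1 hmem with ⟨x, hx, hxe⟩
      exact hj (by rwa [Fin.val_injective hxe] at hx)
    rw [Finset.image_insert, Finset.sum_powerset_insert hjv, Finset.sum_powerset_insert hj,
      ih F]
    congr 1
    rw [ih (fun w => F (insert (↑j) w))]
    refine Finset.sum_congr rfl fun t ht => ?_
    rw [Finset.image_insert]

/-- Corollary: for any d, s ∈ ℕ and ε > 0 there is r such that every
`φ ∈ Pol⁰_d([r], ℝ)` has a disjoint s-subcollection `B` in `[r]` such that the
t-producing function `Φ̃_B` of `φ↓_B` satisfies `‖Φ̃_B(u)‖ < ε` for all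
`u ∈ B^{(≤d)}`. -/
theorem pol0_real_subpolynomial_small_tproducing (d s : ℕ) (ε : ℝ) (hε : 0 < ε) :
    ∃ r : ℕ, ∀ φ : Finset ℕ → ℝ,
      Pol0 (Finset.Icc 1 r) d φ →
      ∃ b : Fin s → Finset ℕ,
        (∀ j, (b j).Nonempty ∧ b j ⊆ Finset.Icc 1 r) ∧
        (∀ j j', j ≠ j' → Disjoint (b j) (b j')) ∧
        ∃ Φtil : Finset (Fin s) → ℝ,
          (∀ γ : Finset (Fin s),
            φ (γ.biUnion b) =
              ∑ u ∈ γ.powerset.filter (fun u => u ≠ ∅ ∧ u.card ≤ d), Φtil u) ∧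
          (∀ u : Finset (Fin s), u ≠ ∅ → u.card ≤ d → distToInt (Φtil u) < ε) := by
  classical
  obtain ⟨N₁, hN₁pos, hN₁⟩ := Lmain d (2 ^ s) ε hε
  refine ⟨s * N₁, ?_⟩
  intro φ hφ
  obtain ⟨hpoly, hφ0⟩ := hφ
  set A : Finset ℕ := Finset.Icc 1 (s * N₁) with hA
  have hAcard : A.card = s * N₁ := by rw [hA, Nat.card_Icc]; omega
  have hPBA : PB A d φ := pb_of_isPolyDeg hpoly
  have key : ∀ kk : ℕ, kk ≤ s → ∃ b : ℕ → Finset ℕ,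
      (∀ t, t < kk → (b t).Nonempty ∧ b t ⊆ A ∧ (b t).card ≤ N₁) ∧
      (∀ t, t < kk → ∀ t', t' < kk → t ≠ t' → Disjoint (b t) (b t')) ∧
      (∀ u : Finset ℕ, u ⊆ Finset.range kk → u.Nonempty →
        distToInt (altSum φ b u ∅) < ε) := by
    intro kk
    induction kk with
    | zero =>
      intro _
      refine ⟨fun _ => ∅, fun t ht => absurd ht (Nat.not_lt_zero t),
        fun t ht => absurd ht (Nat.not_lt_zero t), ?_⟩
      intro u hu hne
      rw [Finset.range_zero, Finset.subset_empty] at hu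
      exact absurd hu hne.ne_empty
    | succ k ihk =>
      intro hks
      obtain ⟨b, h1, h2, h3⟩ := ihk (by omega)
      set U : Finset ℕ := (Finset.range k).biUnion b with hU
      have hUA : U ⊆ A := biUnion_subset.2 fun t ht => (h1 t (mem_range.1 ht)).2.1
      have hUcard : U.card ≤ k * N₁ := by
        calc U.card ≤ ∑ t ∈ Finset.range k, (b t).card := card_biUnion_le
          _ ≤ ∑ _t ∈ Finset.range k, N₁ :=
              Finset.sum_le_sum fun t ht => (h1 t (mem_range.1 ht)).2.2
          _ = k * N₁ := by rw [Finset.sum_const, card_range, smul_eq_mul]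
      have hrem : N₁ ≤ (A \ U).card := by
        have h4 := Finset.le_card_sdiff U A
        have h5 : k * N₁ + N₁ ≤ s * N₁ := by
          calc k * N₁ + N₁ = (k+1) * N₁ := (Nat.succ_mul k N₁).symm
            _ ≤ s * N₁ := Nat.mul_le_mul_right _ hks
        omega
      obtain ⟨A', hA'sub, hA'card⟩ := Finset.exists_subset_card_eq hrem
      set Ik : Type := {u : Finset ℕ // u ∈ (Finset.range k).powerset} with hIk
      have hIkcard : Fintype.card Ik ≤ 2 ^ s := by
        have hcc : Fintype.card Ik = ((Finset.range k).powerset).card :=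
          Fintype.card_coe _
        rw [hcc, Finset.card_powerset, Finset.card_range]
        exact Nat.pow_le_pow_right (by omega) (by omega)
      set θ : Ik → Finset ℕ → ℝ := fun u γ => altSum φ b u.1 γ - altSum φ b u.1 ∅ with hθ
      have hθPB : ∀ u, PB A' d (θ u) := by
        intro u
        have hub : u.1 ⊆ Finset.range k := mem_powerset.1 u.2
        have hwU : u.1.biUnion b ⊆ U :=
          biUnion_subset.2 fun t ht => subset_biUnion_of_mem b (hub ht)
        refine hPBA.theta (fun t ht => (h1 t (mem_range.1 (hub ht))).2.1)
          (hA'sub.trans sdiff_subset) ?_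
        exact (Finset.sdiff_disjoint.mono_left hA'sub).mono_right hwU
      have hθ0 : ∀ u, θ u ∅ = 0 := fun u => sub_self _
      obtain ⟨γnew, hγne, hγsub, hγdist⟩ :=
        hN₁ A' (le_of_eq hA'card.symm) Ik _ hIkcard θ hθPB hθ0
      set b' : ℕ → Finset ℕ := Function.update b k γnew with hb'
      have hb'old : ∀ t, t ≠ k → b' t = b t := fun t ht => Function.update_of_ne ht _ _
      have hb'k : b' k = γnew := Function.update_self _ _ _
      have hγA : γnew ⊆ A := hγsub.trans (hA'sub.trans sdiff_subset)
      have hγU : Disjoint γnew U := Finset.sdiff_disjoint.mono_left (hγsub.trans hA'sub)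
      refine ⟨b', ?_, ?_, ?_⟩
      · intro t ht
        rcases Nat.lt_or_ge t k with htk | htk
        · rw [hb'old t (by omega)]; exact h1 t htk
        · have : t = k := by omega
          subst this
          exact ⟨hb'k ▸ hγne, hb'k ▸ hγA,
            hb'k ▸ ((card_le_card hγsub).trans (le_of_eq hA'card))⟩
      · intro t ht t' ht' htt'
        rcases Nat.lt_or_ge t k with htk | htk <;> rcases Nat.lt_or_ge t' k with ht'k | ht'k
        · rw [hb'old t (by omega), hb'old t' (by omega)]; exact h2 t htk t' ht'k htt'
        · have : t' = k := by omega
          subst this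
          rw [hb'old t (by omega), hb'k]
          exact (hγU.mono_right (subset_biUnion_of_mem b (mem_range.2 htk))).symm
        · have : t = k := by omega
          subst this
          rw [hb'old t' (by omega), hb'k]
          exact hγU.mono_right (subset_biUnion_of_mem b (mem_range.2 ht'k))
        · omega
      · intro u hu hne
        by_cases hk : k ∈ u
        · set u₀ : Finset ℕ := u.erase k with hu₀
          have hu₀sub : u₀ ⊆ Finset.range k := by
            intro x hx
            have hxu := mem_of_mem_erase hx
            have hxk : x ≠ k := ne_of_mem_erase hx
            have := mem_range.1 (hu hxu)
            exact mem_range.2 (by omega)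
          have hknotin : k ∉ u₀ := notMem_erase k u
          have hins : u = insert k u₀ := (insert_erase hk).symm
          have hcongr : ∀ t ∈ u₀, b' t = b t := fun t ht =>
            hb'old t (ne_of_mem_erase ht)
          rw [hins, altSum_insert φ b' hknotin ∅]
          rw [altSum_congr hcongr, altSum_congr hcongr]
          rw [hb'k, empty_union]
          have := hγdist ⟨u₀, mem_powerset.2 hu₀sub⟩
          simpa [hθ] using this
        · have husub : u ⊆ Finset.range k := by
            intro x hx
            have := mem_range.1 (hu hx)
            have hxk : x ≠ k := fun he => hk (he ▸ hx)
            exact mem_range.2 (by omega)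
          have hcongr : ∀ t ∈ u, b' t = b t := fun t ht =>
            hb'old t (fun he => hk (he ▸ ht))
          rw [altSum_congr hcongr]
          exact h3 u husub hne
  obtain ⟨b, hb1, hb2, hb3⟩ := key s le_rfl
  set bF : Fin s → Finset ℕ := fun j => b j.1 with hbF
  refine ⟨bF, ?_, ?_, ?_⟩
  · intro j; exact ⟨(hb1 j.1 j.2).1, (hb1 j.1 j.2).2.1⟩
  · intro j j' hjj'
    exact hb2 j.1 j.2 j'.1 j'.2 (fun h => hjj' (Fin.ext h))
  · set Φtil : Finset (Fin s) → ℝ := fun u => altSum φ b (u.image Fin.val) ∅ with hΦ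
    have hsubA : ∀ (u : Finset (Fin s)), ∀ t ∈ u.image Fin.val, b t ⊆ A := by
      intro u t ht
      rcases Finset.mem_image.1 ht with ⟨x, _, hxe⟩
      exact hxe ▸ (hb1 x.1 x.2).2.1
    have hdisjb : ∀ (u : Finset (Fin s)), ∀ t ∈ u.image Fin.val, ∀ t' ∈ u.image Fin.val,
        t ≠ t' → Disjoint (b t) (b t') := by
      intro u t ht t' ht' htt'
      rcases Finset.mem_image.1 ht with ⟨x, _, hxe⟩
      rcases Finset.mem_image.1 ht' with ⟨x', _, hxe'⟩
      subst hxe; subst hxe'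
      exact hb2 x.1 x.2 x'.1 x'.2 htt'
    refine ⟨Φtil, ?_, ?_⟩
    · intro γ
      have himg : (γ.image Fin.val).biUnion b = γ.biUnion bF := by
        ext x
        simp only [Finset.mem_biUnion, Finset.mem_image]
        constructor
        · rintro ⟨t, ⟨j, hj, rfl⟩, hx⟩; exact ⟨j, hj, hx⟩
        · rintro ⟨j, hj, hx⟩; exact ⟨j.1, ⟨j, hj, rfl⟩, hx⟩
      have hmob : ∑ w ∈ (γ.image Fin.val).powerset, altSum φ b w ∅
          = φ ((γ.image Fin.val).biUnion b) := by
        have := sum_altSum φ b (γ.image Fin.val) ∅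
        simpa using this
      have hre := sum_powerset_image_val γ (fun w => altSum φ b w ∅)
      have hfull : φ (γ.biUnion bF) = ∑ u ∈ γ.powerset, Φtil u := by
        rw [← himg, ← hmob, hre]
      rw [hfull, ← Finset.sum_filter_add_sum_filter_not γ.powerset
        (fun u => u ≠ ∅ ∧ u.card ≤ d) Φtil]
      have hzero : ∑ u ∈ γ.powerset.filter (fun u => ¬(u ≠ ∅ ∧ u.card ≤ d)), Φtil u = 0 := by
        apply Finset.sum_eq_zero
        intro u hu
        obtain ⟨hu1, hu2⟩ := Finset.mem_filter.1 hu
        by_cases hue : u = ∅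
        · subst hue
          simp only [hΦ, Finset.image_empty]
          rw [altSum_empty, hφ0]
        · have hcard : d + 1 ≤ u.card := by
            push_neg at hu2
            have := hu2 (Finset.nonempty_iff_ne_empty.2 hue)
            omega
          have hicard : (u.image Fin.val).card = u.card :=
            Finset.card_image_of_injective u Fin.val_injective
          exact altSum_vanish hPBA (u.image Fin.val).card b _ rfl (by omega)
            (hsubA u) (hdisjb u) ∅ (empty_subset _)
            (fun t ht => disjoint_empty_left _)
      rw [hzero, add_zero]
    · intro u hune hucard
      have hne : (u.image Fin.val).Nonempty :=
        (Finset.nonempty_iff_ne_empty.2 hune).image _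
      have hsub : u.image Fin.val ⊆ Finset.range s := by
        intro t ht
        rcases Finset.mem_image.1 ht with ⟨x, _, hxe⟩
        exact mem_range.2 (hxe ▸ x.2)
      exact hb3 (u.image Fin.val) hsub hne
end

section
/- Let (X,ρ) be a compact metric space and let T : X → X be a homeomorphism such that the system (X,T) is minimal and distal. Suppose there exist points x_0 ≠ y_0 in X such that for every r ∈ ℕ and every δ > 0 there exist a point x ∈ X and integers n_1,…,n_r such that ρ(x, x_0) < δ and ρ(T^{n_{i_1}+⋯+n_{i_s}} x, y_0) < δ for all 1 ≤ s ≤ r and all 1 ≤ i_1 < ⋯ < i_s ≤ r. Then there exist a point x ∈ X and ε > 0 such that for every r ∈ ℕ there exist integers n_1,…,n_r with ρ(T^{n_{i_1}+⋯+n_{i_s}} x, x) > ε for all 1 ≤ s ≤ r and all 1 ≤ i_1 < ⋯ < i_s ≤ r; in particular, the system (X,T) is not IP₀*-recurrent. -/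
open Finset

/-- Let (X,ρ) be a compact metric space and T a self-homeomorphism such that
(X,T) is minimal and distal. If there are points x₀ ≠ y₀ such that for every
r ∈ ℕ and δ > 0 there are x ∈ X and integers n_1,…,n_r with ρ(x,x₀) < δ and
ρ(T^{n_{i_1}+⋯+n_{i_s}} x, y₀) < δ for all nonempty subsets {i_1 < ⋯ < i_s} of
{1,…,r}, then there are a point x ∈ X and ε > 0 such that for every r there are
integers n_1,…,n_r with ρ(T^{n_{i_1}+⋯+n_{i_s}} x, x) > ε for all nonempty
subsets; in particular, the system (X,T) is not IP₀*-recurrent. -/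
theorem regionally_proximal_pair_implies_not_IP0star_recurrent
    {X : Type*} [MetricSpace X] [CompactSpace X] (T : X ≃ₜ X)
    (hmin : ∀ x : X, Dense (Set.range fun n : ℤ => (T.toEquiv ^ n) x))
    (hdistal : ∀ x y : X, x ≠ y →
      ∃ c : ℝ, 0 < c ∧ ∀ n : ℤ, c ≤ dist ((T.toEquiv ^ n) x) ((T.toEquiv ^ n) y))
    (x₀ y₀ : X) (hne : x₀ ≠ y₀)
    (hRP : ∀ r : ℕ, ∀ δ : ℝ, 0 < δ → ∃ x : X, ∃ n : Fin r → ℤ,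
      dist x x₀ < δ ∧ ∀ α : Finset (Fin r), α.Nonempty →
        dist ((T.toEquiv ^ (∑ i ∈ α, n i)) x) y₀ < δ) :
    (∃ x : X, ∃ ε : ℝ, 0 < ε ∧ ∀ r : ℕ, ∃ n : Fin r → ℤ,
      ∀ α : Finset (Fin r), α.Nonempty →
        ε < dist ((T.toEquiv ^ (∑ i ∈ α, n i)) x) x) ∧
    ¬ (∀ (x : X) (U : Set X), IsOpen U → x ∈ U →
        ∃ r : ℕ, ∀ n : Fin r → ℤ, ∃ α : Finset (Fin r), α.Nonempty ∧
          (T.toEquiv ^ (∑ i ∈ α, n i)) x ∈ U) := by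
  classical
  haveI : Nonempty X := ⟨x₀⟩
  -- continuity of all integer powers of T
  have keyN : ∀ (e : X ≃ₜ X) (k : ℕ), Continuous fun x : X => (e.toEquiv ^ k) x := by
    intro e k
    induction k with
    | zero => simpa using continuous_id'
    | succ k ih =>
        have h : (fun x : X => (e.toEquiv ^ (k+1)) x) = fun x : X => (e.toEquiv ^ k) (e x) := by
          funext x; rw [pow_succ]; rfl
        rw [h]
        exact ih.comp e.continuous
  have key : ∀ m : ℤ, Continuous fun x : X => (T.toEquiv ^ m) x := by
    intro m
    cases m with
    | ofNat k =>
        have h : (fun x : X => (T.toEquiv ^ (Int.ofNat k)) x) = fun x : X => (T.toEquiv ^ k) x := by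
          funext x; rw [Int.ofNat_eq_natCast, zpow_natCast]
        rw [h]; exact keyN T k
    | negSucc k =>
        have h : (fun x : X => (T.toEquiv ^ (Int.negSucc k)) x)
            = fun x : X => (T.symm.toEquiv ^ (k+1)) x := by
          funext x; rw [zpow_negSucc, ← inv_pow]; rfl
        rw [h]; exact keyN T.symm (k+1)
  have hcomm : ∀ (a b : ℤ) (x : X),
      (T.toEquiv ^ a) ((T.toEquiv ^ b) x) = (T.toEquiv ^ (a + b)) x := by
    intro a b x
    rw [zpow_add, Equiv.Perm.mul_apply]
  -- the distality constant of the pair (x₀, y₀)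
  obtain ⟨c, hc, hcdist⟩ := hdistal x₀ y₀ hne
  set ε : ℝ := c / 4 with hεdef
  have hεpos : 0 < ε := by positivity
  -- main existence statement
  have main : ∃ x : X, ∃ ε : ℝ, 0 < ε ∧ ∀ r : ℕ, ∃ n : Fin r → ℤ,
      ∀ α : Finset (Fin r), α.Nonempty →
        ε < dist ((T.toEquiv ^ (∑ i ∈ α, n i)) x) x := by
    by_contra hcon
    push_neg at hcon
    -- hcon : ∀ x ε, 0 < ε → ∃ r, ∀ n, ∃ α, α.Nonempty ∧ dist ... ≤ ε
    set C : ℕ → Set X := fun k => {x | ∀ n : Fin k → ℤ, ∃ α : Finset (Fin k),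
      α.Nonempty ∧ dist ((T.toEquiv ^ (∑ i ∈ α, n i)) x) x ≤ ε} with hCdef
    have hclosed : ∀ k, IsClosed (C k) := by
      intro k
      have heq : C k = ⋂ n : Fin k → ℤ, ⋃ (α : Finset (Fin k)) (_ : α.Nonempty),
          {x : X | dist ((T.toEquiv ^ (∑ i ∈ α, n i)) x) x ≤ ε} := by
        ext x
        simp [hCdef, Set.mem_iInter, Set.mem_iUnion]
      rw [heq]
      refine isClosed_iInter fun n => ?_
      refine isClosed_iUnion_of_finite fun α => ?_
      refine isClosed_iUnion_of_finite fun hα => ?_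
      exact isClosed_le (Continuous.dist (key _) continuous_id) continuous_const
    have hcover : ⋃ k, C k = Set.univ := by
      ext x
      simp only [Set.mem_iUnion, Set.mem_univ, iff_true]
      obtain ⟨r, hr⟩ := hcon x ε hεpos
      exact ⟨r, hr⟩
    obtain ⟨k, z, hz⟩ := nonempty_interior_of_iUnion_of_closed hclosed hcover
    obtain ⟨ρ, hρpos, hball⟩ : ∃ ρ > 0, Metric.ball z ρ ⊆ C k := by
      have h1 := isOpen_interior.mem_nhds hz
      rw [Metric.mem_nhds_iff] at h1
      obtain ⟨ρ, hρ, hsub⟩ := h1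
      exact ⟨ρ, hρ, hsub.trans interior_subset⟩
    -- minimality: finitely many preimages of the ball cover X
    have hcov2 : (Set.univ : Set X) ⊆ ⋃ m : ℤ,
        (fun x : X => (T.toEquiv ^ m) x) ⁻¹' Metric.ball z ρ := by
      intro x _
      obtain ⟨y, hy, hyB⟩ := (hmin x).exists_mem_open Metric.isOpen_ball
        ⟨z, Metric.mem_ball_self hρpos⟩
      obtain ⟨m, rfl⟩ := hy
      exact Set.mem_iUnion.mpr ⟨m, hyB⟩
    obtain ⟨F, hF⟩ := isCompact_univ.elim_finite_subcover
      (fun m : ℤ => (fun x : X => (T.toEquiv ^ m) x) ⁻¹' Metric.ball z ρ)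
      (fun m => Metric.isOpen_ball.preimage (key m)) hcov2
    have hFne : F.Nonempty := by
      have := hF (Set.mem_univ x₀)
      simp only [Set.mem_iUnion] at this
      obtain ⟨m, hm, _⟩ := this
      exact ⟨m, hm⟩
    -- uniform continuity of the finitely many maps T^m, m ∈ F
    have hδ : ∀ m : ℤ, ∃ δ > 0, ∀ a b : X, dist a b < δ →
        dist ((T.toEquiv ^ m) a) ((T.toEquiv ^ m) b) < ε := by
      intro m
      have hu : UniformContinuous fun x : X => (T.toEquiv ^ m) x :=
        CompactSpace.uniformContinuous_of_continuous (key m)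
      rw [Metric.uniformContinuous_iff] at hu
      obtain ⟨δ, hδpos, hδ⟩ := hu ε hεpos
      exact ⟨δ, hδpos, fun a b hab => hδ hab⟩
    choose δf hδfpos hδf using hδ
    set δ : ℝ := F.inf' hFne δf with hδdef
    have hδpos : 0 < δ := by
      rw [hδdef, Finset.lt_inf'_iff]
      exact fun m _ => hδfpos m
    -- apply the regional proximality hypothesis
    obtain ⟨x', N, hx', hN'⟩ := hRP k δ hδpos
    have hx'univ := hF (Set.mem_univ x')
    simp only [Set.mem_iUnion, Set.mem_preimage] at hx'univ
    obtain ⟨m, hmF, hmx⟩ := hx'univ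
    have hu : (T.toEquiv ^ m) x' ∈ C k := hball hmx
    obtain ⟨α, hαne, hαd⟩ := hu N
    have hδle : δ ≤ δf m := Finset.inf'_le δf hmF
    set s : ℤ := ∑ i ∈ α, N i with hsdef
    have hswap : (T.toEquiv ^ s) ((T.toEquiv ^ m) x') = (T.toEquiv ^ m) ((T.toEquiv ^ s) x') := by
      rw [hcomm s m, hcomm m s, add_comm]
    rw [hswap] at hαd
    have t1 : dist ((T.toEquiv ^ m) x₀) ((T.toEquiv ^ m) x') < ε := by
      apply hδf m
      rw [dist_comm]
      exact lt_of_lt_of_le hx' hδle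
    have t3 : dist ((T.toEquiv ^ m) ((T.toEquiv ^ s) x')) ((T.toEquiv ^ m) y₀) < ε := by
      apply hδf m
      exact lt_of_lt_of_le (hN' α hαne) hδle
    have t2 : dist ((T.toEquiv ^ m) x') ((T.toEquiv ^ m) ((T.toEquiv ^ s) x')) ≤ ε := by
      rw [dist_comm]; exact hαd
    have tri := dist_triangle4 ((T.toEquiv ^ m) x₀) ((T.toEquiv ^ m) x')
      ((T.toEquiv ^ m) ((T.toEquiv ^ s) x')) ((T.toEquiv ^ m) y₀)
    have hcd := hcdist m
    rw [hεdef] at t1 t2 t3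
    linarith
  refine ⟨main, ?_⟩
  intro hrec
  obtain ⟨x, ε', hε', hx⟩ := main
  obtain ⟨r, hr⟩ := hrec x (Metric.ball x ε') Metric.isOpen_ball (Metric.mem_ball_self hε')
  obtain ⟨n, hn⟩ := hx r
  obtain ⟨α, hαne, hαmem⟩ := hr n
  exact lt_irrefl _ (lt_trans (hn α hαne) (Metric.mem_ball.mp hαmem))
end

section
/- Let S = ⋃_{r=1}^∞ S_r ⊆ ℕ, where S_r = {j·2^{2^r} : j = 1,…,r}. Then (i) for every r ∈ ℕ the set S contains an IP_r-set (indeed S_r is the IP_r-set generated by the r-element sequence n_1 = ⋯ = n_r = 2^{2^r}), and (ii) S contains no IP-set, i.e., there is no infinite sequence (n_i) of integers all of whose finite sums of distinct terms lie in S. Consequently, the complement ℤ∖S is an IP*-set that is not an IP₀*-set. -/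
open Finset

-- k < 2^(2^k)
private lemma aux_klt (k : ℕ) : k < 2 ^ 2 ^ k :=
  lt_of_lt_of_le (Nat.lt_two_pow_self (n := k)) (Nat.pow_le_pow_right (by norm_num) (Nat.lt_two_pow_self (n := k)).le)

/-- If `0 < a < 2^(2^ρ)` and `b = j'·2^(2^ρ)` with `1 ≤ j'`, then `a+b ∉ S` (ℕ version). -/
private lemma aux_pair {a b ρ j' : ℕ} (ha : 0 < a) (halt : a < 2 ^ 2 ^ ρ)
    (hj1 : 1 ≤ j') (hb : b = j' * 2 ^ 2 ^ ρ) :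
    ¬ ∃ σ j : ℕ, 1 ≤ j ∧ j ≤ σ ∧ a + b = j * 2 ^ 2 ^ σ := by
  rintro ⟨σ, j, hj1', hjσ, hsum⟩
  have hbge : 2 ^ 2 ^ ρ ≤ b := by
    rw [hb]; exact Nat.le_mul_of_pos_left _ hj1
  have hρσ : ρ ≤ σ := by
    by_contra h
    push_neg at h
    have h1 : a + b < 2 ^ 2 ^ (σ + 1) := by
      calc a + b = j * 2 ^ 2 ^ σ := hsum
        _ ≤ σ * 2 ^ 2 ^ σ := Nat.mul_le_mul_right _ hjσ
        _ < 2 ^ 2 ^ σ * 2 ^ 2 ^ σ :=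
            Nat.mul_lt_mul_of_lt_of_le (aux_klt σ) le_rfl (Nat.pow_pos (by norm_num))
        _ = 2 ^ 2 ^ (σ + 1) := by rw [← pow_add]; ring_nf
    have h2 : 2 ^ 2 ^ (σ + 1) ≤ 2 ^ 2 ^ ρ :=
      Nat.pow_le_pow_right (by norm_num) (Nat.pow_le_pow_right (by norm_num) h)
    have : a + b < b := lt_of_lt_of_le h1 (le_trans h2 hbge)
    omega
  have hdvdsum : 2 ^ 2 ^ ρ ∣ a + b := by
    rw [hsum]
    exact Dvd.dvd.mul_left (pow_dvd_pow 2 (Nat.pow_le_pow_right (by norm_num) hρσ)) j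
  have hdvdb : 2 ^ 2 ^ ρ ∣ b := hb ▸ Dvd.dvd.mul_left dvd_rfl j'
  have hdvda : 2 ^ 2 ^ ρ ∣ a := by
    have := Nat.dvd_sub hdvdsum hdvdb
    simpa using this
  exact absurd (Nat.le_of_dvd ha hdvda) (not_le.2 halt)

/-- If `1 ≤ c < 2^(2^r)` and `c·2^(2^r) ∈ S` then `c ≤ r` (ℕ version). -/
private lemma aux_same {c r : ℕ} (hc1 : 1 ≤ c) (hclt : c < 2 ^ 2 ^ r)
    (h : ∃ σ j : ℕ, 1 ≤ j ∧ j ≤ σ ∧ c * 2 ^ 2 ^ r = j * 2 ^ 2 ^ σ) : c ≤ r := by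
  obtain ⟨σ, j, hj1, hjσ, heq⟩ := h
  rcases lt_trichotomy σ r with h | h | h
  · -- σ < r : impossible
    exfalso
    have hle : 2 ^ σ ≤ 2 ^ r := Nat.pow_le_pow_right (by norm_num) h.le
    have hsplit : (2:ℕ) ^ 2 ^ r = 2 ^ 2 ^ σ * 2 ^ (2 ^ r - 2 ^ σ) := by
      rw [← pow_add, Nat.add_sub_cancel' hle]
    have hmul : (c * 2 ^ (2 ^ r - 2 ^ σ)) * 2 ^ 2 ^ σ = j * 2 ^ 2 ^ σ := by
      rw [← heq, hsplit]; ring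
    have hj : j = c * 2 ^ (2 ^ r - 2 ^ σ) :=
      (Nat.eq_of_mul_eq_mul_right (Nat.pow_pos (by norm_num)) hmul).symm
    have hgap : 2 ^ σ ≤ 2 ^ r - 2 ^ σ := by
      have h2 : (2:ℕ) ^ (σ+1) ≤ 2 ^ r := Nat.pow_le_pow_right (by norm_num) h
      have h3 : 2 ^ σ + 2 ^ σ ≤ 2 ^ r := by
        have := pow_succ 2 σ
        omega
      omega
    have hbig : 2 ^ 2 ^ σ ≤ j := by
      rw [hj]
      calc (2:ℕ) ^ 2 ^ σ ≤ 2 ^ (2 ^ r - 2 ^ σ) := Nat.pow_le_pow_right (by norm_num) hgap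
        _ ≤ c * 2 ^ (2 ^ r - 2 ^ σ) := Nat.le_mul_of_pos_left _ hc1
    have := aux_klt σ
    omega
  · -- σ = r
    subst h
    have : c = j := Nat.eq_of_mul_eq_mul_right (Nat.pow_pos (by norm_num)) heq
    omega
  · -- σ > r : impossible
    exfalso
    have hle : 2 ^ r ≤ 2 ^ σ := Nat.pow_le_pow_right (by norm_num) h.le
    have hsplit : (2:ℕ) ^ 2 ^ σ = 2 ^ 2 ^ r * 2 ^ (2 ^ σ - 2 ^ r) := by
      rw [← pow_add, Nat.add_sub_cancel' hle]
    have hmul : c * 2 ^ 2 ^ r = (j * 2 ^ (2 ^ σ - 2 ^ r)) * 2 ^ 2 ^ r := by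
      rw [heq, hsplit]; ring
    have hc : c = j * 2 ^ (2 ^ σ - 2 ^ r) :=
      Nat.eq_of_mul_eq_mul_right (Nat.pow_pos (by norm_num)) hmul
    have hgap : 2 ^ r ≤ 2 ^ σ - 2 ^ r := by
      have h2 : (2:ℕ) ^ (r+1) ≤ 2 ^ σ := Nat.pow_le_pow_right (by norm_num) h
      have := pow_succ 2 r
      omega
    have : 2 ^ 2 ^ r ≤ c := by
      rw [hc]
      calc (2:ℕ) ^ 2 ^ r ≤ 2 ^ (2 ^ σ - 2 ^ r) := Nat.pow_le_pow_right (by norm_num) hgap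
        _ ≤ j * 2 ^ (2 ^ σ - 2 ^ r) := Nat.le_mul_of_pos_left _ hj1
    omega

private lemma aux_twomul (r : ℕ) : 2 * r ≤ 2 ^ r := by
  induction r with
  | zero => norm_num
  | succ m ih =>
    rcases Nat.eq_zero_or_pos m with h | h
    · subst h; norm_num
    · have h2 : 1 < 2 ^ m := Nat.one_lt_two_pow_iff.2 h.ne'
      have hp : 2 ^ (m + 1) = 2 ^ m + 2 ^ m := by rw [pow_succ]; ring
      omega

/-- Let `S = ⋃_{r ≥ 1} S_r ⊆ ℤ` where `S_r = {j·2^{2^r} : j = 1,…,r}`. Then: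
(i) for every r, `S` contains an IP_r-set — indeed the IP_r-set generated by the
r-element constant sequence `n_i = 2^{2^r}` lies in `S`;
(ii) `S` contains no IP-set: there is no infinite sequence of integers all of
whose finite sums of distinct terms lie in `S`.
Consequently, `ℤ ∖ S` is an IP*-set (it meets every IP-set) which is not an
IP₀*-set (for every r there is an IP_r-set it misses). -/
theorem IPstar_set_not_IP0star_set (S : Set ℤ)
    (hS : S = {x : ℤ | ∃ r j : ℕ, 1 ≤ j ∧ j ≤ r ∧ x = (j : ℤ) * 2 ^ (2 ^ r)}) :
    (∀ r : ℕ, ∃ n : Fin r → ℤ, (∀ i, n i = 2 ^ (2 ^ r)) ∧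
      ∀ α : Finset (Fin r), α.Nonempty → (∑ i ∈ α, n i) ∈ S) ∧
    (¬ ∃ n : ℕ → ℤ, ∀ α : Finset ℕ, α.Nonempty → (∑ i ∈ α, n i) ∈ S) ∧
    (∀ n : ℕ → ℤ, ∃ α : Finset ℕ, α.Nonempty ∧ (∑ i ∈ α, n i) ∈ Sᶜ) ∧
    (¬ ∃ r : ℕ, ∀ n : Fin r → ℤ, ∃ α : Finset (Fin r), α.Nonempty ∧
      (∑ i ∈ α, n i) ∈ Sᶜ) := by
  -- membership characterization for natural numbers
  have hmem : ∀ m : ℕ, (m : ℤ) ∈ S ↔ ∃ r j : ℕ, 1 ≤ j ∧ j ≤ r ∧ m = j * 2 ^ 2 ^ r := by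
    intro m
    rw [hS]
    simp only [Set.mem_setOf_eq]
    constructor
    · rintro ⟨r, j, h1, h2, h3⟩
      refine ⟨r, j, h1, h2, ?_⟩
      exact_mod_cast h3
    · rintro ⟨r, j, h1, h2, h3⟩
      exact ⟨r, j, h1, h2, by exact_mod_cast h3⟩
  -- Part (i) core
  have key1 : ∀ r : ℕ, ∀ α : Finset (Fin r), α.Nonempty →
      (∑ _i ∈ α, (2:ℤ) ^ 2 ^ r) ∈ S := by
    intro r α hα
    rw [Finset.sum_const, nsmul_eq_mul, hS]
    refine ⟨r, α.card, hα.card_pos, ?_, rfl⟩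
    exact (Finset.card_le_univ α).trans_eq (by simp)
  -- Part (ii)/(iii) core
  have key2 : ∀ n : ℕ → ℤ, ¬ ∀ α : Finset ℕ, α.Nonempty → (∑ i ∈ α, n i) ∈ S := by
    intro n hn
    have hrep : ∀ i : ℕ, ∃ R Jv : ℕ, 1 ≤ Jv ∧ Jv ≤ R ∧ n i = (Jv : ℤ) * 2 ^ 2 ^ R := by
      intro i
      have h := hn {i} ⟨i, Finset.mem_singleton_self i⟩
      rw [hS] at h
      simpa using h
    choose R J hJ1 hJR hnval using hrep
    by_cases hall : ∀ i, R i = R 0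
    · -- all generators lie in the same block S_r
      set r := R 0 with hr
      set c : ℕ := ∑ i ∈ Finset.range (r + 1), J i with hc
      have hr1 : 1 ≤ r := le_trans (hJ1 0) (hJR 0)
      have hsum : (∑ i ∈ Finset.range (r + 1), n i) = ((c * 2 ^ 2 ^ r : ℕ) : ℤ) := by
        push_cast [hc, Finset.sum_mul]
        exact Finset.sum_congr rfl fun i _ => by rw [hnval i, hall i]
      have hmemS := hn (Finset.range (r + 1)) Finset.nonempty_range_add_one
      rw [hsum, hmem] at hmemS
      have hclow : r + 1 ≤ c := by
        have := Finset.card_nsmul_le_sum (Finset.range (r + 1)) J 1 fun i _ => hJ1 i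
        simpa using this
      have hchigh : c ≤ (r + 1) * r := by
        have := Finset.sum_le_card_nsmul (Finset.range (r + 1)) J r
          fun i _ => (hJR i).trans_eq (hall i)
        simpa [smul_eq_mul] using this
      have hclt : c < 2 ^ 2 ^ r := by
        have h1 : r + 1 ≤ 2 ^ r := Nat.lt_two_pow_self (n := r)
        have h2 : (r + 1) * r < 2 ^ r * 2 ^ r := by
          have := Nat.lt_two_pow_self (n := r)
          exact Nat.mul_lt_mul_of_le_of_lt h1 this (by positivity)
        have h3 : 2 ^ r * 2 ^ r = 2 ^ (2 * r) := by rw [← pow_add]; ring_nf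
        have h4 : (2:ℕ) ^ (2 * r) ≤ 2 ^ 2 ^ r :=
          Nat.pow_le_pow_right (by norm_num) (aux_twomul r)
        omega
      have := aux_same (le_trans (by omega) hclow) hclt hmemS
      omega
    · push_neg at hall
      obtain ⟨i, hi⟩ := hall
      have hi0 : i ≠ 0 := fun h => hi (by rw [h])
      have main : ∀ p q : ℕ, p ≠ q → R p < R q → False := by
        intro p q hpq hlt
        have hmemS := hn {p, q} ⟨p, by simp⟩
        rw [Finset.sum_pair hpq, hnval p, hnval q] at hmemS
        set a := J p * 2 ^ 2 ^ R p with ha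
        set b := J q * 2 ^ 2 ^ R q with hb
        have hcast : (J p : ℤ) * 2 ^ 2 ^ R p + (J q : ℤ) * 2 ^ 2 ^ R q = ((a + b : ℕ) : ℤ) := by
          push_cast [ha, hb]; ring
        rw [hcast, hmem] at hmemS
        refine aux_pair ?_ ?_ (hJ1 q) hb hmemS
        · exact Nat.mul_pos (hJ1 p) (by positivity)
        · calc a ≤ R p * 2 ^ 2 ^ R p := Nat.mul_le_mul_right _ (hJR p)
            _ < 2 ^ 2 ^ R p * 2 ^ 2 ^ R p :=
                Nat.mul_lt_mul_of_lt_of_le (aux_klt (R p)) le_rfl (by positivity)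
            _ = 2 ^ 2 ^ (R p + 1) := by rw [← pow_add]; ring_nf
            _ ≤ 2 ^ 2 ^ R q :=
                Nat.pow_le_pow_right (by norm_num) (Nat.pow_le_pow_right (by norm_num) hlt)
      rcases lt_or_gt_of_ne hi with h | h
      · exact main i 0 hi0 h
      · exact main 0 i (Ne.symm hi0) h
  refine ⟨?_, ?_, ?_, ?_⟩
  · intro r
    exact ⟨fun _ => 2 ^ 2 ^ r, fun _ => rfl, key1 r⟩
  · rintro ⟨n, hn⟩
    exact key2 n hn
  · intro n
    by_contra hcon
    push_neg at hcon
    exact key2 n fun α hα => by simpa [Set.not_notMem] using hcon α hα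
  · rintro ⟨r, hr⟩
    obtain ⟨α, hα, hcompl⟩ := hr fun _ => 2 ^ 2 ^ r
    exact hcompl (key1 r α hα)
end
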